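/- Let V be an almost periodic Banach G-module (uniformly bounded with all orbits relatively norm-compact). Then every finite-dimensional G-submodule C of V admits a closed G-invariant complement: V = C ⊕ W with W a closed G-invariant subspace. -/

import Mathlib

open Filter Topology MeasureTheory Set

section APAux

variable {G V : Type*} [Group G] [TopologicalSpace G]
  [NormedAddCommGroup V] [NormedSpace ℝ V]

/-- The closure of the range of the representation, inside `V → V` with the
topology of pointwise convergence. -/
def APX (ρ : G →* (V →L[ℝ] V)) : Set (V → V) :=
  closure (Set.range fun g => ⇑(ρ g))

variable (ρ : G →* (V →L[ℝ] V))

lemma mem_APX (g : G) : ⇑(ρ g) ∈ APX ρ :=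
  subset_closure ⟨g, rfl⟩

lemma apx_add {T : V → V} (hT : T ∈ APX ρ) (v w : V) : T (v + w) = T v + T w := by
  have hcl : IsClosed {f : V → V | f (v + w) = f v + f w} :=
    isClosed_eq (continuous_apply (v + w)) ((continuous_apply v).add (continuous_apply w))
  exact closure_minimal (by rintro _ ⟨g, rfl⟩; exact map_add (ρ g) v w) hcl hT

lemma apx_smul {T : V → V} (hT : T ∈ APX ρ) (a : ℝ) (v : V) : T (a • v) = a • T v := by
  have hcl : IsClosed {f : V → V | f (a • v) = a • f v} :=
    isClosed_eq (continuous_apply (a • v)) ((continuous_apply v).const_smul a)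
  exact closure_minimal (by rintro _ ⟨g, rfl⟩; exact map_smul (ρ g) a v) hcl hT

lemma apx_sub {T : V → V} (hT : T ∈ APX ρ) (v w : V) : T (v - w) = T v - T w := by
  have h := apx_add ρ hT (v - w) w
  rw [sub_add_cancel] at h
  exact eq_sub_of_add_eq h.symm

lemma apx_norm {Cb : ℝ} (hCb : ∀ g v, ‖ρ g v‖ ≤ Cb * ‖v‖) {T : V → V}
    (hT : T ∈ APX ρ) (v : V) : ‖T v‖ ≤ Cb * ‖v‖ := by
  have hcl : IsClosed {f : V → V | ‖f v‖ ≤ Cb * ‖v‖} :=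
    isClosed_le (continuous_apply v).norm continuous_const
  exact closure_minimal (by rintro _ ⟨g, rfl⟩; exact hCb g v) hcl hT

lemma apx_comp {S T : V → V} (hS : S ∈ APX ρ) (hT : T ∈ APX ρ) : S ∘ T ∈ APX ρ := by
  have step1 : ∀ (g : G), ∀ T' ∈ APX ρ, ⇑(ρ g) ∘ T' ∈ APX ρ := by
    intro g T' hT'
    have hc : Continuous fun f : V → V => ⇑(ρ g) ∘ f :=
      continuous_pi fun v => (ρ g).continuous.comp (continuous_apply v)
    have h1 : ⇑(ρ g) ∘ T' ∈ (fun f : V → V => ⇑(ρ g) ∘ f) '' (APX ρ) := ⟨T', hT', rfl⟩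
    have h2 : (fun f : V → V => ⇑(ρ g) ∘ f) '' (APX ρ) ⊆
        closure ((fun f : V → V => ⇑(ρ g) ∘ f) '' (Set.range fun g => ⇑(ρ g))) :=
      image_closure_subset_closure_image hc
    refine closure_mono ?_ (h2 h1)
    rintro _ ⟨_, ⟨h, rfl⟩, rfl⟩
    refine ⟨g * h, ?_⟩
    funext v
    simp [map_mul]
  have hc2 : Continuous fun f : V → V => f ∘ T :=
    continuous_pi fun v => continuous_apply (T v)
  have h1 : S ∘ T ∈ (fun f : V → V => f ∘ T) '' (APX ρ) := ⟨S, hS, rfl⟩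
  have h2 : (fun f : V → V => f ∘ T) '' (APX ρ) ⊆
      closure ((fun f : V → V => f ∘ T) '' (Set.range fun g => ⇑(ρ g))) :=
    image_closure_subset_closure_image hc2
  have h3 : ((fun f : V → V => f ∘ T) '' (Set.range fun g => ⇑(ρ g))) ⊆ APX ρ := by
    rintro _ ⟨_, ⟨g, rfl⟩, rfl⟩
    exact step1 g T hT
  have hXcl : IsClosed (APX ρ) := isClosed_closure
  exact closure_minimal h3 hXcl (h2 h1)

lemma apx_compact (hap : ∀ v : V, IsCompact (closure (Set.range fun g => ρ g v))) :
    IsCompact (APX ρ) := by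
  refine IsCompact.of_isClosed_subset (isCompact_univ_pi fun v => hap v)
    isClosed_closure ?_
  refine closure_minimal ?_ (isClosed_set_pi fun v _ => isClosed_closure)
  rintro _ ⟨g, rfl⟩ v _
  exact subset_closure ⟨g, rfl⟩

lemma tendsto_of_norm_sub {α : Type*} {l : Filter α} {f h : α → V} {y : V}
    (h1 : Tendsto h l (𝓝 y)) (h2 : Tendsto (fun x => ‖f x - h x‖) l (𝓝 0)) :
    Tendsto f l (𝓝 y) := by
  have h3 : Tendsto (fun x => f x - h x) l (𝓝 0) :=
    tendsto_zero_iff_norm_tendsto_zero.mpr h2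
  have h4 := h3.add h1
  simpa using h4

lemma tendsto_app {Cb : ℝ} (hCb : ∀ g v, ‖ρ g v‖ ≤ Cb * ‖v‖) {ι : Type*}
    {l : Filter ι} [l.NeBot] (σ : ι → G) {A : V → V} {b : ι → V} {w v : V}
    (hA : Tendsto (fun i => ⇑(ρ (σ i))) l (𝓝 A))
    (hb : Tendsto b l (𝓝 w))
    (hv : ∀ i, ρ (σ i) (b i) = v) : A w = v := by
  have h1 : Tendsto (fun i => ρ (σ i) w) l (𝓝 (A w)) :=
    ((continuous_apply w).tendsto A).comp hA
  have h2 : Tendsto (fun i => ‖ρ (σ i) (b i) - ρ (σ i) w‖) l (𝓝 0) := by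
    have hb0 : Tendsto (fun i => Cb * ‖b i - w‖) l (𝓝 (Cb * 0)) :=
      tendsto_const_nhds.mul (tendsto_iff_norm_sub_tendsto_zero.mp hb)
    rw [mul_zero] at hb0
    refine squeeze_zero (fun i => norm_nonneg _) (fun i => ?_) hb0
    rw [← map_sub]
    exact hCb (σ i) _
  have h3 : Tendsto (fun i => ρ (σ i) (b i)) l (𝓝 (A w)) := tendsto_of_norm_sub h1 h2
  have h4 : Tendsto (fun _ : ι => v) l (𝓝 (A w)) := by
    refine h3.congr fun i => hv i
  exact (tendsto_nhds_unique h4 tendsto_const_nhds)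

lemma apx_exists_inverse {Cb : ℝ} (hCb : ∀ g v, ‖ρ g v‖ ≤ Cb * ‖v‖)
    (hap : ∀ v : V, IsCompact (closure (Set.range fun g => ρ g v)))
    {T : V → V} (hT : T ∈ APX ρ) :
    ∃ S ∈ APX ρ, (∀ v, S (T v) = v) ∧ (∀ v, T (S v) = v) := by
  obtain ⟨u, hu_range, hu_le⟩ := mem_closure_iff_ultrafilter.mp hT
  have hne : (Filter.comap (fun g : G => ⇑(ρ g)) ↑u).NeBot := by
    refine Filter.comap_neBot fun s hs => ?_
    obtain ⟨x, hx⟩ := u.nonempty_of_mem (Filter.inter_mem hs hu_range)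
    obtain ⟨g, rfl⟩ := hx.2
    exact ⟨g, hx.1⟩
  set u' : Ultrafilter G := @Ultrafilter.of _ _ hne with hu'def
  have hu' : Tendsto (fun g : G => ⇑(ρ g)) u' (𝓝 T) := by
    have h1 : Filter.map (fun g : G => ⇑(ρ g)) ↑u' ≤ ↑u := by
      calc Filter.map (fun g : G => ⇑(ρ g)) ↑u'
          ≤ Filter.map (fun g : G => ⇑(ρ g))
              (Filter.comap (fun g : G => ⇑(ρ g)) ↑u) :=
            Filter.map_mono (Ultrafilter.of_le _)
        _ ≤ ↑u := Filter.map_comap_le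
    exact h1.trans hu_le
  have hmem : APX ρ ∈ Ultrafilter.map (fun g : G => ⇑(ρ g⁻¹)) u' := by
    refine Filter.mem_map.mpr (Filter.univ_mem' fun g => ?_)
    exact mem_APX ρ g⁻¹
  obtain ⟨S, hS_mem, hS_le⟩ :=
    (apx_compact ρ hap).ultrafilter_le_nhds (Ultrafilter.map (fun g : G => ⇑(ρ g⁻¹)) u')
      (Filter.le_principal_iff.mpr hmem)
  have hSt : Tendsto (fun g : G => ⇑(ρ g⁻¹)) u' (𝓝 S) := hS_le
  refine ⟨S, hS_mem, fun v => ?_, fun v => ?_⟩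
  · refine tendsto_app ρ hCb (fun g : G => g⁻¹) hSt
      (((continuous_apply v).tendsto T).comp hu') (fun g => ?_)
    show ρ g⁻¹ (ρ g v) = v
    simp only [← ContinuousLinearMap.mul_apply, ← map_mul, inv_mul_cancel, map_one,
      ContinuousLinearMap.one_apply]
  · refine tendsto_app ρ hCb (fun g : G => g) hu'
      (((continuous_apply v).tendsto S).comp hSt) (fun g => ?_)
    show ρ g (ρ g⁻¹ v) = v
    simp only [← ContinuousLinearMap.mul_apply, ← map_mul, mul_inv_cancel, map_one,
      ContinuousLinearMap.one_apply]

end APAux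

/-- in an almost periodic Banach `G`-module, every finite-dimensional
invariant subspace admits a closed invariant complement. -/
theorem stmt7 {G V : Type*} [Group G] [TopologicalSpace G]
    [NormedAddCommGroup V] [NormedSpace ℝ V] [CompleteSpace V]
    (ρ : G →* (V →L[ℝ] V)) (hcont : ∀ v : V, Continuous fun g => ρ g v)
    (hub : ∃ Cb : ℝ, ∀ g : G, ‖ρ g‖ ≤ Cb)
    (hap : ∀ v : V, IsCompact (closure (Set.range fun g => ρ g v)))
    (C : Submodule ℝ V) [FiniteDimensional ℝ C]
    (hCinv : ∀ g : G, ∀ v ∈ C, ρ g v ∈ C) :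
    ∃ W : Submodule ℝ V, IsClosed (W : Set V) ∧ (∀ g : G, ∀ v ∈ W, ρ g v ∈ W) ∧
      IsCompl C W := by
  classical
  obtain ⟨Cb₀, hCb₀⟩ := hub
  have hCb : ∀ g v, ‖ρ g v‖ ≤ max Cb₀ 0 * ‖v‖ := fun g v =>
    ((ρ g).le_opNorm v).trans
      (mul_le_mul_of_nonneg_right ((hCb₀ g).trans (le_max_left _ _)) (norm_nonneg v))
  set Cb : ℝ := max Cb₀ 0 with hCbdef
  have hCb0 : (0 : ℝ) ≤ Cb := le_max_right _ _
  have hCcl : IsClosed (C : Set V) := Submodule.closed_of_finiteDimensional C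
  -- every element of the enveloping semigroup preserves `C`
  have hCX : ∀ T ∈ APX ρ, ∀ v ∈ C, T v ∈ C := by
    intro T hT v hv
    have hcl : IsClosed {f : V → V | f v ∈ C} := hCcl.preimage (continuous_apply v)
    exact closure_minimal (by rintro _ ⟨g, rfl⟩; exact hCinv g v hv) hcl hT
  -- group structure on the enveloping compact space
  letI instMul : Mul ↥(APX ρ) := ⟨fun S T => ⟨S.1 ∘ T.1, apx_comp ρ S.2 T.2⟩⟩
  letI instOne : One ↥(APX ρ) := ⟨⟨⇑(ρ 1), mem_APX ρ 1⟩⟩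
  letI instInv : Inv ↥(APX ρ) := ⟨fun T =>
    ⟨(apx_exists_inverse ρ hCb hap T.2).choose,
      (apx_exists_inverse ρ hCb hap T.2).choose_spec.1⟩⟩
  have hinv_left : ∀ (T : ↥(APX ρ)) (v : V), (T⁻¹ : ↥(APX ρ)).1 (T.1 v) = v := fun T =>
    (apx_exists_inverse ρ hCb hap T.2).choose_spec.2.1
  have hinv_right : ∀ (T : ↥(APX ρ)) (v : V), T.1 ((T⁻¹ : ↥(APX ρ)).1 v) = v := fun T =>
    (apx_exists_inverse ρ hCb hap T.2).choose_spec.2.2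
  letI instGroup : Group ↥(APX ρ) :=
    Group.ofLeftAxioms (fun a b c => Subtype.ext rfl)
      (fun a => Subtype.ext (funext fun v => by
        show ρ 1 (a.1 v) = a.1 v
        rw [map_one]; rfl))
      (fun a => Subtype.ext (funext fun v => by
        show (a⁻¹ : ↥(APX ρ)).1 (a.1 v) = ρ 1 v
        rw [hinv_left a v, map_one]; rfl))
  haveI : CompactSpace ↥(APX ρ) := isCompact_iff_compactSpace.mp (apx_compact ρ hap)
  -- joint continuity of application
  have happ : Continuous fun p : ↥(APX ρ) × V => p.1.1 p.2 := by
    rw [continuous_iff_continuousAt]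
    rintro ⟨T₀, w₀⟩
    have h1 : Tendsto (fun p : ↥(APX ρ) × V => p.1.1 w₀) (𝓝 (T₀, w₀)) (𝓝 (T₀.1 w₀)) :=
      (((continuous_apply w₀).comp continuous_subtype_val).comp continuous_fst).continuousAt
    have h2 : Tendsto (fun p : ↥(APX ρ) × V => ‖p.1.1 p.2 - p.1.1 w₀‖)
        (𝓝 (T₀, w₀)) (𝓝 0) := by
      have hsnd : Tendsto (fun p : ↥(APX ρ) × V => p.2) (𝓝 (T₀, w₀)) (𝓝 w₀) :=
        continuous_snd.continuousAt
      have hb : Tendsto (fun p : ↥(APX ρ) × V => Cb * ‖p.2 - w₀‖)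
          (𝓝 (T₀, w₀)) (𝓝 (Cb * 0)) :=
        tendsto_const_nhds.mul (tendsto_iff_norm_sub_tendsto_zero.mp hsnd)
      rw [mul_zero] at hb
      refine squeeze_zero (fun p => norm_nonneg _) (fun p => ?_) hb
      rw [← apx_sub ρ p.1.2]
      exact apx_norm ρ hCb p.1.2 _
    exact tendsto_of_norm_sub h1 h2
  haveI : ContinuousMul ↥(APX ρ) := by
    refine ⟨?_⟩
    have hc : Continuous fun p : ↥(APX ρ) × ↥(APX ρ) => (fun v => p.1.1 (p.2.1 v) : V → V) :=
      continuous_pi fun v => happ.comp (continuous_fst.prodMk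
        (((continuous_apply v).comp continuous_subtype_val).comp continuous_snd))
    exact hc.subtype_mk fun p => apx_comp ρ p.1.2 p.2.2
  have hinvcont : Continuous fun T : ↥(APX ρ) => T⁻¹ := by
    rw [continuous_iff_ultrafilter]
    intro T u hu
    obtain ⟨S, -, hS⟩ := isCompact_univ.ultrafilter_le_nhds
      (Ultrafilter.map (fun x : ↥(APX ρ) => x⁻¹) u) (by simp)
    have hS' : Tendsto (fun x : ↥(APX ρ) => x⁻¹) u (𝓝 S) := hS
    have hu2 : Tendsto (fun x : ↥(APX ρ) => x) u (𝓝 T) := hu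
    have h1 : Tendsto (fun x : ↥(APX ρ) => x * x⁻¹) u (𝓝 (T * S)) :=
      (continuous_mul.tendsto (T, S)).comp (hu2.prodMk_nhds hS')
    have h2 : Tendsto (fun _ : ↥(APX ρ) => (1 : ↥(APX ρ))) u (𝓝 (T * S)) :=
      h1.congr fun x => mul_inv_cancel x
    have hTS : T * S = 1 := tendsto_nhds_unique h2 tendsto_const_nhds
    rw [show T⁻¹ = S from (inv_eq_of_mul_eq_one_right hTS)]
    exact hS'
  haveI : IsTopologicalGroup ↥(APX ρ) := { continuous_inv := hinvcont }
  -- Haar measure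
  letI : MeasurableSpace ↥(APX ρ) := borel _
  haveI : BorelSpace ↥(APX ρ) := ⟨rfl⟩
  haveI : Nonempty ↥(APX ρ) := ⟨1⟩
  set K₀ : TopologicalSpace.PositiveCompacts ↥(APX ρ) :=
    ⟨⟨Set.univ, isCompact_univ⟩, by simpa using Set.univ_nonempty⟩ with hK₀
  set μ : Measure ↥(APX ρ) := Measure.haarMeasure K₀ with hμ
  haveI hμleft : μ.IsMulLeftInvariant := by
    rw [hμ]; infer_instance
  haveI hμprob : IsProbabilityMeasure μ := by
    rw [hμ]
    exact ⟨Measure.haarMeasure_self⟩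
  -- a continuous projection of `V` onto `C`
  obtain ⟨P₀, hP₀⟩ := Submodule.ClosedComplemented.of_finiteDimensional C
  -- the averaged integrand
  set f : V → ↥(APX ρ) → ↥C := fun v T =>
    ⟨T.1 ↑(P₀ ((T⁻¹ : ↥(APX ρ)).1 v)), hCX _ T.2 _ (SetLike.coe_mem _)⟩ with hfdef
  have hfc : ∀ v, Continuous (f v) := by
    intro v
    apply Continuous.subtype_mk
    have c1 : Continuous fun T : ↥(APX ρ) => ((P₀ ((T⁻¹ : ↥(APX ρ)).1 v) : ↥C) : V) :=
      continuous_subtype_val.comp (P₀.continuous.comp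
        (((continuous_apply v).comp continuous_subtype_val).comp hinvcont))
    exact happ.comp (continuous_id.prodMk c1)
  have hfi : ∀ v, Integrable (f v) μ := by
    intro v
    refine (hfc v).integrable_of_hasCompactSupport ?_
    exact IsCompact.of_isClosed_subset isCompact_univ (isClosed_tsupport _) (Set.subset_univ _)
  -- value on `C`
  have hfconst : ∀ (v : V) (hv : v ∈ C) (T : ↥(APX ρ)), f v T = ⟨v, hv⟩ := by
    intro v hv T
    apply Subtype.ext
    show T.1 ↑(P₀ ((T⁻¹ : ↥(APX ρ)).1 v)) = v
    have h1 : (T⁻¹ : ↥(APX ρ)).1 v ∈ C := hCX _ (T⁻¹ : ↥(APX ρ)).2 v hv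
    have h2 : P₀ ((T⁻¹ : ↥(APX ρ)).1 v) = ⟨(T⁻¹ : ↥(APX ρ)).1 v, h1⟩ :=
      hP₀ ⟨(T⁻¹ : ↥(APX ρ)).1 v, h1⟩
    rw [h2]
    exact hinv_right T v
  have hint_const : ∀ (v : V) (hv : v ∈ C), (∫ T, f v T ∂μ) = ⟨v, hv⟩ := by
    intro v hv
    have : f v = fun _ : ↥(APX ρ) => (⟨v, hv⟩ : ↥C) := funext fun T => hfconst v hv T
    rw [this, integral_const]
    simp
  -- equivariance
  set γ : G → ↥(APX ρ) := fun g => ⟨⇑(ρ g), mem_APX ρ g⟩ with hγdef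
  have hkey : ∀ (g : G) (v : V) (S : ↥(APX ρ)),
      (↑(f (ρ g v) (γ g * S)) : V) = ρ g ↑(f v S) := by
    intro g v S
    show (γ g * S).1 ↑(P₀ (((γ g * S)⁻¹ : ↥(APX ρ)).1 (ρ g v))) = ρ g (S.1 ↑(P₀ ((S⁻¹ : ↥(APX ρ)).1 v)))
    have h1 : ((γ g * S)⁻¹ : ↥(APX ρ)).1 (ρ g v) = (S⁻¹ : ↥(APX ρ)).1 v := by
      rw [mul_inv_rev]
      show (S⁻¹ : ↥(APX ρ)).1 (((γ g)⁻¹ : ↥(APX ρ)).1 (ρ g v)) = (S⁻¹ : ↥(APX ρ)).1 v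
      exact congrArg (S⁻¹ : ↥(APX ρ)).1 (hinv_left (γ g) v)
    rw [h1]
    rfl
  have hequiv : ∀ (g : G) (v : V),
      (↑(∫ T, f (ρ g v) T ∂μ) : V) = ρ g ↑(∫ T, f v T ∂μ) := by
    intro g v
    have e1 : (↑(∫ T, f (ρ g v) T ∂μ) : V) = ∫ T, (↑(f (ρ g v) T) : V) ∂μ :=
      (C.subtypeL.integral_comp_comm (hfi _)).symm
    have e2 : ∫ T, (↑(f (ρ g v) T) : V) ∂μ = ∫ T, (↑(f (ρ g v) (γ g * T)) : V) ∂μ :=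
      (integral_mul_left_eq_self (fun T => (↑(f (ρ g v) T) : V)) (γ g)).symm
    rw [e1, e2]
    have e3 : ∫ T, (↑(f (ρ g v) (γ g * T)) : V) ∂μ = ∫ T, ρ g (↑(f v T) : V) ∂μ := by
      refine integral_congr_ae (ae_of_all _ fun T => ?_)
      exact hkey g v T
    rw [e3]
    have e4 : ∫ T, ρ g (↑(f v T) : V) ∂μ = ρ g (∫ T, (↑(f v T) : V) ∂μ) :=
      (ρ g).integral_comp_comm (C.subtypeL.integrable_comp (hfi v))
    rw [e4]
    have e5 : (∫ T, (↑(f v T) : V) ∂μ) = ↑(∫ T, f v T ∂μ) :=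
      C.subtypeL.integral_comp_comm (hfi v)
    rw [e5]
  -- assemble the linear projection
  have hadd : ∀ v w : V, (∫ T, f (v + w) T ∂μ) = (∫ T, f v T ∂μ) + ∫ T, f w T ∂μ := by
    intro v w
    have : f (v + w) = fun T => f v T + f w T := by
      funext T
      apply Subtype.ext
      show T.1 ↑(P₀ ((T⁻¹ : ↥(APX ρ)).1 (v + w))) =
        T.1 ↑(P₀ ((T⁻¹ : ↥(APX ρ)).1 v)) + T.1 ↑(P₀ ((T⁻¹ : ↥(APX ρ)).1 w))
      rw [apx_add ρ (T⁻¹ : ↥(APX ρ)).2 v w, map_add, Submodule.coe_add,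
        apx_add ρ T.2]
    rw [this]
    exact integral_add (hfi v) (hfi w)
  have hsmul : ∀ (a : ℝ) (v : V), (∫ T, f (a • v) T ∂μ) = a • ∫ T, f v T ∂μ := by
    intro a v
    have : f (a • v) = fun T => a • f v T := by
      funext T
      apply Subtype.ext
      show T.1 ↑(P₀ ((T⁻¹ : ↥(APX ρ)).1 (a • v))) = a • (T.1 ↑(P₀ ((T⁻¹ : ↥(APX ρ)).1 v)))
      rw [apx_smul ρ (T⁻¹ : ↥(APX ρ)).2 a v, P₀.map_smul, Submodule.coe_smul,
        apx_smul ρ T.2]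
    rw [this]
    exact integral_smul a (f v)
  set Pl : V →ₗ[ℝ] ↥C :=
    { toFun := fun v => ∫ T, f v T ∂μ
      map_add' := hadd
      map_smul' := hsmul } with hPldef
  have hPl_apply : ∀ v, Pl v = ∫ T, f v T ∂μ := fun v => rfl
  -- boundedness of Pl, hence continuity
  have hPl_bound : ∀ v, ‖Pl v‖ ≤ (Cb * (‖P₀‖ * Cb)) * ‖v‖ := by
    intro v
    have hb : ∀ T : ↥(APX ρ), ‖f v T‖ ≤ Cb * (‖P₀‖ * (Cb * ‖v‖)) := by
      intro T
      have hnorm : ‖f v T‖ = ‖T.1 ↑(P₀ ((T⁻¹ : ↥(APX ρ)).1 v))‖ := rfl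
      rw [hnorm]
      calc ‖T.1 ↑(P₀ ((T⁻¹ : ↥(APX ρ)).1 v))‖
          ≤ Cb * ‖(↑(P₀ ((T⁻¹ : ↥(APX ρ)).1 v)) : V)‖ := apx_norm ρ hCb T.2 _
        _ ≤ Cb * (‖P₀‖ * ‖(T⁻¹ : ↥(APX ρ)).1 v‖) := by
            refine mul_le_mul_of_nonneg_left ?_ hCb0
            exact P₀.le_opNorm ((T⁻¹ : ↥(APX ρ)).1 v)
        _ ≤ Cb * (‖P₀‖ * (Cb * ‖v‖)) := by
            refine mul_le_mul_of_nonneg_left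
              (mul_le_mul_of_nonneg_left ?_ (norm_nonneg (P₀ : V →L[ℝ] ↥C))) hCb0
            exact apx_norm ρ hCb (T⁻¹ : ↥(APX ρ)).2 v
    have hle := norm_integral_le_of_norm_le_const (μ := μ) (ae_of_all _ hb)
    rw [measureReal_def, measure_univ, ENNReal.toReal_one, mul_one] at hle
    rw [hPl_apply]
    exact hle.trans_eq (by ring)
  have hPc : Continuous Pl := by
    exact (Pl.mkContinuous (Cb * (‖P₀‖ * Cb)) hPl_bound).continuous
  -- conclusion
  refine ⟨LinearMap.ker Pl, ?_, ?_, ?_⟩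
  · have hset : ((LinearMap.ker Pl : Submodule ℝ V) : Set V) = ⇑Pl ⁻¹' {0} := by
      ext x
      simp [LinearMap.mem_ker]
    rw [hset]
    exact isClosed_singleton.preimage hPc
  · intro g v hv
    rw [LinearMap.mem_ker] at hv ⊢
    have hv' : (∫ T, f v T ∂μ) = 0 := hv
    have h0 : (↑(Pl (ρ g v)) : V) = 0 := by
      rw [hPl_apply, hequiv g v, hv']
      simp
    exact ZeroMemClass.coe_eq_zero.mp h0
  · refine LinearMap.isCompl_of_proj fun x => ?_
    rw [hPl_apply, hint_const ↑x x.2]
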